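/- Monotonicity of Riccati solutions in the noise term: if P₁ and P₂ are the stabilizing (symmetric PSD, with A − Pᵢ Hᵀ(JSJᵀ)⁻¹H Hurwitz) solutions of A P + P Aᵀ + Qᵢ − P Hᵀ(JSJᵀ)⁻¹H P = 0 for symmetric matrices Q₁ ≤ Q₂ (Loewner order), then P₁ ≤ P₂. -/

import Mathlib

open Matrix NormedSpace Filter Topology

lemma aux_pow_exp {a : ℝ} (ha : a < 0) (j : ℕ) :
    Tendsto (fun t : ℝ => t ^ j * Real.exp (a * t)) atTop (𝓝 0) := by
  have h1 : Tendsto (fun t : ℝ => (-a) * t) atTop atTop :=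
    Tendsto.const_mul_atTop (by linarith) tendsto_id
  have h2 := (Real.tendsto_pow_mul_exp_neg_atTop_nhds_zero j).comp h1
  have h3 := h2.const_mul ((-a) ^ j)⁻¹
  rw [mul_zero] at h3
  refine h3.congr fun t => ?_
  simp only [Function.comp]
  rw [mul_pow]
  have hne : (-a) ^ j ≠ 0 := pow_ne_zero _ (by linarith)
  field_simp

lemma scalar_decay {μ : ℂ} (hμ : μ.re < 0) (j : ℕ) :
    Tendsto (fun t : ℝ => Complex.exp (t * μ) * (t : ℂ) ^ j) atTop (𝓝 0) := by
  rw [tendsto_zero_iff_norm_tendsto_zero]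
  have key := aux_pow_exp hμ j
  refine squeeze_zero_norm' ?_ key
  filter_upwards [eventually_ge_atTop (0:ℝ)] with t ht
  rw [norm_norm, norm_mul, Complex.norm_exp,
    norm_pow, Complex.norm_real, Real.norm_eq_abs, abs_of_nonneg ht]
  have h : (↑t * μ).re = μ.re * t := by simp [mul_comm]
  rw [h, mul_comm]

lemma decay_of_genEig {n : ℕ} (M : Matrix (Fin n) (Fin n) ℂ) {μ : ℂ} (hμ : μ.re < 0) (k : ℕ)
    (v : Fin n → ℂ) (hv : ((M - μ • 1) ^ k) *ᵥ v = 0) :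
    Tendsto (fun t : ℝ => (exp (t • M)) *ᵥ v) atTop (𝓝 0) := by
  letI : SeminormedRing (Matrix (Fin n) (Fin n) ℂ) := Matrix.linftyOpSemiNormedRing
  letI : NormedRing (Matrix (Fin n) (Fin n) ℂ) := Matrix.linftyOpNormedRing
  letI : NormedAlgebra ℝ (Matrix (Fin n) (Fin n) ℂ) := Matrix.linftyOpNormedAlgebra
  letI : NormedAlgebra ℂ (Matrix (Fin n) (Fin n) ℂ) := Matrix.linftyOpNormedAlgebra
  set N : Matrix (Fin n) (Fin n) ℂ := M - μ • 1 with hN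
  -- linear map X ↦ X *ᵥ v, as a CLM
  let L0 : Matrix (Fin n) (Fin n) ℂ →ₗ[ℝ] (Fin n → ℂ) :=
    { toFun := fun X => X *ᵥ v
      map_add' := fun X Y => Matrix.add_mulVec X Y v
      map_smul' := fun r X => Matrix.smul_mulVec r X v }
  let L : Matrix (Fin n) (Fin n) ℂ →L[ℝ] (Fin n → ℂ) :=
    { toLinearMap := L0, cont := L0.continuous_of_finiteDimensional }
  have hL : ∀ X, L X = X *ᵥ v := fun _ => rfl
  have hsplit : ∀ t : ℝ, exp (t • M) = Complex.exp (t * μ) • exp (t • N) := by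
    intro t
    have hM' : t • M = ((t : ℂ) * μ) • (1 : Matrix (Fin n) (Fin n) ℂ) + t • N := by
      rw [hN, smul_sub]
      rw [← smul_assoc, Complex.real_smul]
      abel
    rw [hM']
    have hcomm : Commute (((t : ℂ) * μ) • (1 : Matrix (Fin n) (Fin n) ℂ)) (t • N) :=
      ((Commute.one_left (t • N)).smul_left _)
    erw [NormedSpace.exp_add_of_commute_of_mem_ball (𝕂 := ℂ) hcomm
      ((expSeries_radius_eq_top ℂ (Matrix (Fin n) (Fin n) ℂ)).symm ▸ edist_lt_top _ _)
      ((expSeries_radius_eq_top ℂ (Matrix (Fin n) (Fin n) ℂ)).symm ▸ edist_lt_top _ _)]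
    have h1 : exp (((t : ℂ) * μ) • (1 : Matrix (Fin n) (Fin n) ℂ))
        = Complex.exp ((t : ℂ) * μ) • (1 : Matrix (Fin n) (Fin n) ℂ) := by
      erw [← Algebra.algebraMap_eq_smul_one, ← Algebra.algebraMap_eq_smul_one,
        ← map_exp (algebraMap ℂ (Matrix (Fin n) (Fin n) ℂ)) (continuous_algebraMap _ _)]
      congr 1
      rw [Complex.exp_eq_exp_ℂ]
    erw [h1, smul_mul_assoc, one_mul]
    rfl
  have hexpN : ∀ t : ℝ, (exp (t • N)) *ᵥ v
      = ∑ j ∈ Finset.range k, ((j.factorial : ℝ)⁻¹ * t ^ j) • (N ^ j *ᵥ v) := by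
    intro t
    have h1 : (exp (t • N)) *ᵥ v = L (exp (t • N)) := rfl
    rw [h1, exp_eq_tsum ℝ, L.map_tsum (expSeries_summable' (𝕂 := ℝ) (t • N))]
    have h2 : ∀ j : ℕ, L ((j.factorial : ℝ)⁻¹ • (t • N) ^ j)
        = ((j.factorial : ℝ)⁻¹ * t ^ j) • (N ^ j *ᵥ v) := by
      intro j
      rw [_root_.map_smul, smul_pow, _root_.map_smul, hL, smul_smul]
    simp_rw [h2]
    refine tsum_eq_sum ?_
    intro j hj
    have hjk : k ≤ j := le_of_not_gt fun h => hj (Finset.mem_range.mpr h)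
    have : N ^ j *ᵥ v = 0 := by
      obtain ⟨m, rfl⟩ := Nat.exists_eq_add_of_le hjk
      rw [add_comm, pow_add, ← Matrix.mulVec_mulVec, hv, Matrix.mulVec_zero]
    rw [this, smul_zero]
  have key : ∀ t : ℝ, (exp (t • M)) *ᵥ v
      = ∑ j ∈ Finset.range k,
          (j.factorial : ℝ)⁻¹ • ((Complex.exp (t * μ) * (t : ℂ) ^ j) • (N ^ j *ᵥ v)) := by
    intro t
    rw [hsplit t, Matrix.smul_mulVec, hexpN t, Finset.smul_sum]
    refine Finset.sum_congr rfl fun j _ => ?_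
    rw [← algebraMap_smul ℂ ((j.factorial : ℝ)⁻¹ * t ^ j) (N ^ j *ᵥ v),
      ← algebraMap_smul ℂ ((j.factorial : ℝ)⁻¹)
        ((Complex.exp (↑t * μ) * (t : ℂ) ^ j) • (N ^ j *ᵥ v)),
      smul_smul, smul_smul]
    congr 1
    simp only [Complex.coe_algebraMap]
    push_cast
    ring
  simp_rw [key]
  have : (0 : Fin n → ℂ) = ∑ j ∈ Finset.range k, (j.factorial : ℝ)⁻¹ • ((0:ℂ) • (N ^ j *ᵥ v)) := by
    simp
  rw [this]
  refine tendsto_finset_sum _ fun j _ => ?_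
  exact (Tendsto.smul_const (scalar_decay hμ j) (N ^ j *ᵥ v)).const_smul _

lemma decay {n : ℕ} (M : Matrix (Fin n) (Fin n) ℂ) (hM : ∀ z ∈ spectrum ℂ M, z.re < 0)
    (v : Fin n → ℂ) : Tendsto (fun t : ℝ => (exp (t • M)) *ᵥ v) atTop (𝓝 0) := by
  set e := (Matrix.toLinAlgEquiv' : Matrix (Fin n) (Fin n) ℂ ≃ₐ[ℂ] _) with he
  set f : Module.End ℂ (Fin n → ℂ) := e M with hf
  have hspec : spectrum ℂ f = spectrum ℂ M := AlgEquiv.spectrum_eq e M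
  have htop : v ∈ ⨆ μ : ℂ, f.maxGenEigenspace μ := by
    rw [Module.End.iSup_maxGenEigenspace_eq_top f]; trivial
  refine Submodule.iSup_induction (motive := fun x => Tendsto (fun t : ℝ => (exp (t • M)) *ᵥ x)
    atTop (𝓝 0)) _ htop ?_ ?_ ?_
  · intro μ x hx
    rcases eq_or_ne x 0 with rfl | hx0
    · simpa [Matrix.mulVec_zero] using (tendsto_const_nhds :
        Tendsto (fun _ : ℝ => (0 : Fin n → ℂ)) atTop (𝓝 0))
    obtain ⟨k, hk⟩ := (Module.End.mem_maxGenEigenspace f μ x).mp hx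
    have hμ : μ.re < 0 := by
      apply hM
      rw [← hspec, spectrum.mem_iff]
      intro hunit
      have h2 : IsUnit ((f - μ • 1) ^ k) := by
        have : IsUnit (f - μ • 1) := by
          have := hunit.neg
          rwa [neg_sub, Algebra.algebraMap_eq_smul_one] at this
        exact this.pow k
      have hinj := ((Module.End.isUnit_iff _).mp h2).injective
      apply hx0
      have : ((f - μ • 1) ^ k) x = ((f - μ • 1) ^ k) 0 := by simpa using hk
      exact hinj this
    have hk' : ((M - μ • 1) ^ k) *ᵥ x = 0 := by
      have : e ((M - μ • 1) ^ k) = (f - μ • 1) ^ k := by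
        rw [map_pow, map_sub, _root_.map_smul, _root_.map_one]
      calc ((M - μ • 1) ^ k) *ᵥ x = e ((M - μ • 1) ^ k) x := by
            rw [he]; rfl
        _ = 0 := by rw [this]; exact hk
    exact decay_of_genEig M hμ k x hk'
  · simpa [Matrix.mulVec_zero] using (tendsto_const_nhds :
      Tendsto (fun _ : ℝ => (0 : Fin n → ℂ)) atTop (𝓝 0))
  · intro x y hx hy
    have := hx.add hy
    rw [add_zero] at this
    refine this.congr fun t => ?_
    rw [Matrix.mulVec_add]

lemma spec_transpose {n : ℕ} (M : Matrix (Fin n) (Fin n) ℂ) {z : ℂ}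
    (hz : z ∈ spectrum ℂ Mᵀ) : z ∈ spectrum ℂ M := by
  rw [spectrum.mem_iff] at hz ⊢
  intro hunit
  apply hz
  have h1 : (algebraMap ℂ (Matrix (Fin n) (Fin n) ℂ) z - M)ᵀ
      = algebraMap ℂ (Matrix (Fin n) (Fin n) ℂ) z - Mᵀ := by
    rw [Matrix.transpose_sub]
    congr 1
    rw [Algebra.algebraMap_eq_smul_one (A := Matrix (Fin n) (Fin n) ℂ),
      Matrix.transpose_smul, Matrix.transpose_one]
  rw [← h1]
  rw [Matrix.isUnit_iff_isUnit_det, Matrix.det_transpose, ← Matrix.isUnit_iff_isUnit_det]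
  exact hunit


lemma real_decay {n : ℕ} (B : Matrix (Fin n) (Fin n) ℝ)
    (hB : ∀ z ∈ spectrum ℂ (B.map (algebraMap ℝ ℂ)), z.re < 0) (x : Fin n → ℝ) :
    Tendsto (fun t : ℝ => (exp (t • B)) *ᵥ x) atTop (𝓝 0) := by
  letI : SeminormedRing (Matrix (Fin n) (Fin n) ℝ) := Matrix.linftyOpSemiNormedRing
  letI : NormedRing (Matrix (Fin n) (Fin n) ℝ) := Matrix.linftyOpNormedRing
  letI : NormedAlgebra ℝ (Matrix (Fin n) (Fin n) ℝ) := Matrix.linftyOpNormedAlgebra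
  letI : SeminormedRing (Matrix (Fin n) (Fin n) ℂ) := Matrix.linftyOpSemiNormedRing
  letI : NormedRing (Matrix (Fin n) (Fin n) ℂ) := Matrix.linftyOpNormedRing
  letI : NormedAlgebra ℝ (Matrix (Fin n) (Fin n) ℂ) := Matrix.linftyOpNormedAlgebra
  have hc := decay (B.map (algebraMap ℝ ℂ)) hB (fun i => (x i : ℂ))
  have hmap : ∀ t : ℝ, exp (t • B.map (algebraMap ℝ ℂ)) = (exp (t • B)).map (algebraMap ℝ ℂ) := by
    intro t
    have hsm : t • B.map (algebraMap ℝ ℂ) = (t • B).map (algebraMap ℝ ℂ) := by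
      ext i j
      simp [Matrix.map_apply, Complex.real_smul]
    have hcont : Continuous ((algebraMap ℝ ℂ).mapMatrix :
        Matrix (Fin n) (Fin n) ℝ →+* Matrix (Fin n) (Fin n) ℂ) := by
      exact continuous_id.matrix_map Complex.continuous_ofReal
    have := map_exp_of_mem_ball (𝕂 := ℝ) ((algebraMap ℝ ℂ).mapMatrix :
        Matrix (Fin n) (Fin n) ℝ →+* Matrix (Fin n) (Fin n) ℂ) hcont (t • B)
        ((expSeries_radius_eq_top ℝ (Matrix (Fin n) (Fin n) ℝ)).symm ▸ edist_lt_top _ _)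
    erw [hsm, ← RingHom.mapMatrix_apply, ← this, RingHom.mapMatrix_apply]
    rfl
  have hcomp : ∀ (Y : Matrix (Fin n) (Fin n) ℝ) (i : Fin n),
      ((Y.map (algebraMap ℝ ℂ)) *ᵥ (fun i => (x i : ℂ))) i = ((Y *ᵥ x) i : ℂ) := by
    intro Y i
    simp [Matrix.mulVec, dotProduct, Matrix.map_apply]
  rw [tendsto_pi_nhds]
  intro i
  have h1 : Tendsto (fun t : ℝ => ((exp (t • B) *ᵥ x) i : ℂ)) atTop (𝓝 0) := by
    refine ((tendsto_pi_nhds.mp hc) i).congr fun t => ?_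
    rw [hmap t, hcomp]
  have h2 := (Complex.continuous_re.tendsto 0).comp h1
  simpa [Function.comp_def] using h2

lemma quad_identity {n : ℕ} (A' D : Matrix (Fin n) (Fin n) ℝ) (u : Fin n → ℝ) :
    (∑ i, ∑ j, ((A'ᵀ *ᵥ u) i * (D i j * u j) + u i * (D i j * (A'ᵀ *ᵥ u) j)))
      = u ⬝ᵥ ((A' * D + D * A'ᵀ) *ᵥ u) := by
  have e1 : (∑ i, ∑ j, (A'ᵀ *ᵥ u) i * (D i j * u j)) = (A'ᵀ *ᵥ u) ⬝ᵥ (D *ᵥ u) := by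
    simp [dotProduct, Matrix.mulVec, Finset.mul_sum]
  have e2 : (∑ i, ∑ j, u i * (D i j * (A'ᵀ *ᵥ u) j)) = u ⬝ᵥ (D *ᵥ (A'ᵀ *ᵥ u)) := by
    simp [dotProduct, Matrix.mulVec, Finset.mul_sum]
  have e3 : (A'ᵀ *ᵥ u) ⬝ᵥ (D *ᵥ u) = u ⬝ᵥ ((A' * D) *ᵥ u) := by
    rw [Matrix.mulVec_transpose, Matrix.dotProduct_mulVec, Matrix.vecMul_vecMul,
      Matrix.dotProduct_mulVec]
  have e4 : u ⬝ᵥ (D *ᵥ (A'ᵀ *ᵥ u)) = u ⬝ᵥ ((D * A'ᵀ) *ᵥ u) := by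
    rw [Matrix.mulVec_mulVec]
  simp only [Finset.sum_add_distrib]
  rw [e1, e2, e3, e4, Matrix.add_mulVec, dotProduct_add]


open Matrix in
/-- Monotonicity of stabilizing Riccati solutions in the noise term: if `P₁, P₂`
are symmetric PSD solutions of `A P + P Aᵀ + Qᵢ − P Hᵀ (JSJᵀ)⁻¹ H P = 0`
(`JSJᵀ = c > 0` scalar) that are stabilizing (`A − Pᵢ Hᵀ c⁻¹ H` Hurwitz), and
`Q₁ ≤ Q₂` in the Loewner order, then `P₁ ≤ P₂`. -/
theorem stmt19 (n : ℕ) (A : Matrix (Fin n) (Fin n) ℝ) (H : Matrix (Fin 1) (Fin n) ℝ)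
    (c : ℝ) (hc : 0 < c)
    (Q₁ Q₂ P₁ P₂ : Matrix (Fin n) (Fin n) ℝ)
    (hQ₁ : Q₁.PosSemidef) (hQ₂ : Q₂.PosSemidef)
    (hP₁sym : P₁.IsSymm) (hP₂sym : P₂.IsSymm)
    (hP₁psd : P₁.PosSemidef) (hP₂psd : P₂.PosSemidef)
    (hric₁ : A * P₁ + P₁ * Aᵀ + Q₁ - c⁻¹ • (P₁ * Hᵀ * H * P₁) = 0)
    (hric₂ : A * P₂ + P₂ * Aᵀ + Q₂ - c⁻¹ • (P₂ * Hᵀ * H * P₂) = 0)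
    (hstab₁ : ∀ z ∈ spectrum ℂ ((A - c⁻¹ • (P₁ * Hᵀ * H)).map (algebraMap ℝ ℂ)), z.re < 0)
    (hstab₂ : ∀ z ∈ spectrum ℂ ((A - c⁻¹ • (P₂ * Hᵀ * H)).map (algebraMap ℝ ℂ)), z.re < 0)
    (hQ : (Q₂ - Q₁).PosSemidef) :
    (P₂ - P₁).PosSemidef := by
  classical
  set G : Matrix (Fin n) (Fin n) ℝ := c⁻¹ • (Hᵀ * H) with hGdef
  set Δ : Matrix (Fin n) (Fin n) ℝ := P₂ - P₁ with hΔdef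
  set A' : Matrix (Fin n) (Fin n) ℝ := A - c⁻¹ • (P₂ * Hᵀ * H) with hA'def
  have hGsymm : Gᵀ = G := by
    rw [hGdef, Matrix.transpose_smul, Matrix.transpose_mul, Matrix.transpose_transpose]
  have hΔsym : Δᵀ = Δ := by
    rw [hΔdef, Matrix.transpose_sub, hP₁sym.eq, hP₂sym.eq]
  have hmulG : ∀ P : Matrix (Fin n) (Fin n) ℝ, c⁻¹ • (P * Hᵀ * H * P) = P * G * P := by
    intro P
    simp only [hGdef, Matrix.mul_smul, Matrix.smul_mul, mul_assoc]
    congr 1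
    simp only [Matrix.mul_assoc]
  have hA'G : A' = A - P₂ * G := by
    simp only [hA'def, hGdef, Matrix.mul_smul, mul_assoc]
    congr 2
    simp only [Matrix.mul_assoc]
  have hA'T : A'ᵀ = Aᵀ - G * P₂ := by
    rw [hA'G, Matrix.transpose_sub, Matrix.transpose_mul, hGsymm, hP₂sym.eq]
  set W : Matrix (Fin n) (Fin n) ℝ := (Q₂ - Q₁) + Δ * G * Δ with hWdef
  -- the Lyapunov identity
  have hlyap : A' * Δ + Δ * A'ᵀ = -W := by
    have h1 : A * P₁ + P₁ * Aᵀ + Q₁ - P₁ * G * P₁ = 0 := by rw [← hmulG]; exact hric₁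
    have h2 : A * P₂ + P₂ * Aᵀ + Q₂ - P₂ * G * P₂ = 0 := by rw [← hmulG]; exact hric₂
    have key : A' * Δ + Δ * A'ᵀ + W
        = (A * P₂ + P₂ * Aᵀ + Q₂ - P₂ * G * P₂) - (A * P₁ + P₁ * Aᵀ + Q₁ - P₁ * G * P₁) := by
      rw [hA'T, hA'G, hWdef, hΔdef]
      noncomm_ring
    rw [h1, h2, sub_zero] at key
    exact eq_neg_of_add_eq_zero_left key
  -- W is PSD (as a quadratic form)
  have hW2 : W = (Q₂ - Q₁) + c⁻¹ • ((H * Δ)ᴴ * (H * Δ)) := by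
    rw [hWdef, Matrix.conjTranspose_eq_transpose_of_trivial]
    congr 1
    rw [Matrix.transpose_mul, hΔsym, hGdef, Matrix.mul_smul, Matrix.smul_mul]
    congr 1
    simp only [Matrix.mul_assoc]
  have hWpsd : ∀ y : Fin n → ℝ, 0 ≤ y ⬝ᵥ (W *ᵥ y) := by
    intro y
    have h1 := hQ.dotProduct_mulVec_nonneg y
    have h2 := (Matrix.posSemidef_conjTranspose_mul_self (H * Δ)).dotProduct_mulVec_nonneg y
    rw [star_trivial] at h1 h2
    rw [hW2, Matrix.add_mulVec, dotProduct_add, Matrix.smul_mulVec,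
      dotProduct_smul, smul_eq_mul]
    have h3 : (0:ℝ) ≤ c⁻¹ := inv_nonneg.mpr hc.le
    nlinarith [mul_nonneg h3 h2]
  -- spectrum of B := A'ᵀ (complexified) lies in the open left half plane
  have hspecB : ∀ z ∈ spectrum ℂ ((A'ᵀ).map (algebraMap ℝ ℂ)), z.re < 0 := by
    intro z hz
    rw [Matrix.transpose_map] at hz
    exact hstab₂ z (spec_transpose _ hz)
  -- the quadratic form of Δ along trajectories
  refine Matrix.PosSemidef.of_dotProduct_mulVec_nonneg ?_ ?_
  · show (P₂ - P₁)ᴴ = P₂ - P₁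
    rw [Matrix.conjTranspose_eq_transpose_of_trivial]
    exact hΔsym
  intro x
  rw [star_trivial]
  letI : SeminormedRing (Matrix (Fin n) (Fin n) ℝ) := Matrix.linftyOpSemiNormedRing
  letI : NormedRing (Matrix (Fin n) (Fin n) ℝ) := Matrix.linftyOpNormedRing
  letI : NormedAlgebra ℝ (Matrix (Fin n) (Fin n) ℝ) := Matrix.linftyOpNormedAlgebra
  set B : Matrix (Fin n) (Fin n) ℝ := A'ᵀ with hB
  set w : ℝ → (Fin n → ℝ) := fun t => (exp (t • B)) *ᵥ x with hwdef
  have hwD : ∀ t, HasDerivAt w (B *ᵥ w t) t := by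
    intro t
    have h1 : HasDerivAt (fun u : ℝ => exp (u • B)) (B * exp (t • B)) t :=
      hasDerivAt_exp_smul_const' B t
    let L0 : Matrix (Fin n) (Fin n) ℝ →ₗ[ℝ] (Fin n → ℝ) :=
      { toFun := fun X => X *ᵥ x
        map_add' := fun X Y => Matrix.add_mulVec X Y x
        map_smul' := fun r X => Matrix.smul_mulVec r X x }
    let L : Matrix (Fin n) (Fin n) ℝ →L[ℝ] (Fin n → ℝ) :=
      { toLinearMap := L0, cont := L0.continuous_of_finiteDimensional }
    have h2 := (L.hasFDerivAt).comp_hasDerivAt t h1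
    have h3 : L (B * exp (t • B)) = B *ᵥ w t := by
      show (B * exp (t • B)) *ᵥ x = B *ᵥ w t
      rw [← Matrix.mulVec_mulVec]
    replace h2 := h2.congr_deriv h3
    exact h2
  set g : ℝ → ℝ := fun t => ∑ i, ∑ j, w t i * (Δ i j * w t j) with hgdef
  have hgD : ∀ t, HasDerivAt g (w t ⬝ᵥ ((A' * Δ + Δ * A'ᵀ) *ᵥ w t)) t := by
    intro t
    have hwi : ∀ i, HasDerivAt (fun u => w u i) ((B *ᵥ w t) i) t :=
      fun i => hasDerivAt_pi.mp (hwD t) i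
    have hraw : HasDerivAt g
        (∑ i, ∑ j, ((B *ᵥ w t) i * (Δ i j * w t j) + w t i * (Δ i j * (B *ᵥ w t) j))) t := by
      refine HasDerivAt.fun_sum fun i _ => ?_
      refine HasDerivAt.fun_sum fun j _ => ?_
      exact (hwi i).mul ((hwi j).const_mul (Δ i j))
    have := quad_identity A' Δ (w t)
    rw [hB] at hraw
    rwa [this] at hraw
  have hanti : Antitone g := by
    refine antitone_of_deriv_nonpos (fun t => (hgD t).differentiableAt) fun t => ?_
    rw [(hgD t).deriv, hlyap, Matrix.neg_mulVec, dotProduct_neg]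
    exact neg_nonpos.mpr (hWpsd (w t))
  have hw0 : Tendsto w atTop (𝓝 0) := real_decay B hspecB x
  have hq : Continuous fun v : Fin n → ℝ => ∑ i, ∑ j, v i * (Δ i j * v j) :=
    continuous_finset_sum _ fun i _ => continuous_finset_sum _ fun j _ =>
      ((continuous_apply i).mul (continuous_const.mul (continuous_apply j)))
  have hg0 : Tendsto g atTop (𝓝 0) := by
    have h := (hq.tendsto 0).comp hw0
    simpa [Function.comp_def] using h
  have hfinal : (0:ℝ) ≤ g 0 := by
    refine le_of_tendsto hg0 ?_
    filter_upwards [eventually_ge_atTop (0:ℝ)] with t ht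
    exact hanti ht
  have hg00 : g 0 = x ⬝ᵥ ((P₂ - P₁) *ᵥ x) := by
    have hw00 : w 0 = x := by
      rw [hwdef]
      simp [Matrix.one_mulVec]
    rw [hgdef]
    simp only [hw00, ← hΔdef]
    simp [dotProduct, Matrix.mulVec, Finset.mul_sum]
  rw [hg00] at hfinal
  exact hfinal
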